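/- Let f : (0,1] → ℝ be positive and differentiable, ρ : (0,1] → ℝ absolutely continuous with ρ(y) = O(y) as y → 0⁺ and f(y) bounded. Then ∫₀¹ f(y)⁻¹ (f(y)|ρ(y)|)' dy = |ρ(1)| − ∫₀¹ (f'(y)/f(y))|ρ(y)| dy + (boundary term at 0 vanishes); in particular if f'/f = 2h + α with 2h(y)|ρ(y)| ≥ 0, then ∫₀¹ 2h|ρ| dy ≤ ∫₀¹ f⁻¹(f|ρ|)' dy + ∫₀¹ |α||ρ| dy − |ρ(1)| ≤ ∫₀¹ |ρ' + 2hρ + αρ| dy + ∫₀¹ |α||ρ| dy. -/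

import Mathlib

open MeasureTheory Filter Asymptotics

lemma kw_sqrt_pos (a d : ℝ) (hd : 0 < d) : 0 < Real.sqrt (a ^ 2 + d ^ 2) :=
  Real.sqrt_pos.2 (by positivity)

lemma kw_abs_le_sqrt (a d : ℝ) : |a| ≤ Real.sqrt (a ^ 2 + d ^ 2) := by
  rw [← Real.sqrt_sq_eq_abs]
  exact Real.sqrt_le_sqrt (by nlinarith [sq_nonneg d])

lemma kw_sq_div_le (a d : ℝ) (hd : 0 < d) : a ^ 2 / Real.sqrt (a ^ 2 + d ^ 2) ≤ |a| := by
  rw [div_le_iff₀ (kw_sqrt_pos a d hd)]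
  calc a ^ 2 = |a| * |a| := (abs_mul_abs_self a).symm ▸ (sq a)
  _ ≤ |a| * Real.sqrt (a ^ 2 + d ^ 2) :=
      mul_le_mul_of_nonneg_left (kw_abs_le_sqrt a d) (abs_nonneg a)

lemma kw_sqrt_le (a d : ℝ) (hd : 0 ≤ d) : Real.sqrt (a ^ 2 + d ^ 2) ≤ |a| + d := by
  rw [show |a| + d = Real.sqrt ((|a| + d) ^ 2) from
    (Real.sqrt_sq (by positivity)).symm]
  apply Real.sqrt_le_sqrt
  have : a ^ 2 = |a| ^ 2 := (sq_abs a).symm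
  nlinarith [abs_nonneg a]

lemma kw_maxsub (q : ℝ) : max q 0 = q + max (-q) 0 := by
  rcases le_total q 0 with h | h
  · simp [max_eq_right h, max_eq_left (neg_nonneg.2 h)]
  · simp [max_eq_left h, max_eq_right (neg_nonpos.2 h)]

lemma kw_key_real (ρ q : ℝ → ℝ) (ε δ : ℝ) (M : ℕ)
    (hρderiv : ∀ y ∈ Set.Ioc (0:ℝ) 1, DifferentiableAt ℝ ρ y)
    (hq : AEMeasurable q (volume.restrict (Set.Ioc (0:ℝ) 1)))
    (intE : IntegrableOn (fun y => deriv ρ y + q y * ρ y) (Set.Ioc (0:ℝ) 1))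
    (intqm : IntegrableOn (fun y => max (-q y) 0 * |ρ y|) (Set.Ioc (0:ℝ) 1))
    (hε : 0 < ε) (hε1 : ε < 1) (hδ : 0 < δ) :
    ∫⁻ y in Set.Ioc ε 1,
        ENNReal.ofReal (min (max (q y) 0 * ρ y ^ 2 / Real.sqrt (ρ y ^ 2 + δ ^ 2)) (M:ℝ))
      ≤ ENNReal.ofReal ((∫ y in Set.Ioc (0:ℝ) 1, |deriv ρ y + q y * ρ y|)
        + (∫ y in Set.Ioc (0:ℝ) 1, max (-q y) 0 * |ρ y|) + (|ρ ε| + δ)) := by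
  set S := Set.Ioc (0:ℝ) 1 with hS
  set E : ℝ → ℝ := fun y => deriv ρ y + q y * ρ y with hE
  set Ψ : ℝ → ℝ := fun y => Real.sqrt (ρ y ^ 2 + δ ^ 2) with hΨdef
  have hΨpos : ∀ y, 0 < Ψ y := fun y => kw_sqrt_pos _ _ hδ
  show ∫⁻ y in Set.Ioc ε 1, ENNReal.ofReal (min (max (q y) 0 * ρ y ^ 2 / Ψ y) (M:ℝ))
      ≤ ENNReal.ofReal ((∫ y in S, |E y|) + (∫ y in S, max (-q y) 0 * |ρ y|) + (|ρ ε| + δ))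
  have hsub : Set.Icc ε 1 ⊆ S := fun y hy => ⟨lt_of_lt_of_le hε hy.1, hy.2⟩
  have hsubo : Set.Ioc ε 1 ⊆ S := fun y hy => ⟨lt_trans hε hy.1, hy.2⟩
  -- derivative of Ψ
  have hΨderiv : ∀ y ∈ S, HasDerivAt Ψ (ρ y * deriv ρ y / Ψ y) y := by
    intro y hy
    have h1 : HasDerivAt (fun z => ρ z ^ 2 + δ ^ 2) (2 * ρ y * deriv ρ y) y := by
      have := ((hρderiv y hy).hasDerivAt.pow 2).add_const (δ ^ 2)
      refine this.congr_deriv ?_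
      push_cast
      ring
    have hne : ρ y ^ 2 + δ ^ 2 ≠ 0 := by positivity
    have h2 := (Real.hasDerivAt_sqrt hne).comp y h1
    refine h2.congr_deriv ?_
    have hΨne : Ψ y ≠ 0 := ne_of_gt (hΨpos y)
    rw [hΨdef]
    field_simp
  -- measurability on Icc ε 1
  have hres : ∀ {g : ℝ → ℝ}, AEMeasurable g (volume.restrict S) →
      AEMeasurable g (volume.restrict (Set.Icc ε 1)) := fun hg =>
    hg.mono_measure (Measure.restrict_mono hsub le_rfl)
  have hρcont : ContinuousOn ρ S := fun y hy => ((hρderiv y hy).continuousAt).continuousWithinAt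
  have mρ : AEMeasurable ρ (volume.restrict S) := hρcont.aemeasurable measurableSet_Ioc
  have mdρ : Measurable (deriv ρ) := measurable_deriv ρ
  have mE : AEMeasurable E (volume.restrict S) := mdρ.aemeasurable.add (hq.mul mρ)
  have mρ' := hres mρ
  have mE' := hres mE
  have mq' := hres hq
  have mΨ : AEMeasurable Ψ (volume.restrict (Set.Icc ε 1)) := by
    have h0 : AEMeasurable (fun y => ρ y ^ 2 + δ ^ 2) (volume.restrict (Set.Icc ε 1)) := by
      have := (mρ'.mul mρ').add_const (δ ^ 2)
      convert this using 2 with y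
      simp only [Pi.mul_apply]
      ring
    exact Real.continuous_sqrt.measurable.comp_aemeasurable h0
  have mθ : AEMeasurable (fun y => max (q y) 0 * ρ y ^ 2 / Ψ y)
      (volume.restrict (Set.Icc ε 1)) :=
    ((mq'.max (aemeasurable_const (b := (0:ℝ)))).mul (mρ'.mul mρ')).div mΨ |>.congr (by
      filter_upwards with y
      simp only [Pi.mul_apply, Pi.div_apply, Pi.pow_apply]
      ring_nf)
  -- integrability on Icc ε 1
  have intρE : IntegrableOn (fun y => ρ y * E y / Ψ y) (Set.Icc ε 1) := by
    refine Integrable.mono' ((IntegrableOn.mono_set intE.abs hsub)) ((mρ'.mul mE').div mΨ).aestronglyMeasurable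
      (ae_of_all _ fun y => ?_)
    rw [Real.norm_eq_abs, abs_div, abs_of_pos (hΨpos y), abs_mul, div_le_iff₀ (hΨpos y)]
    nlinarith [kw_abs_le_sqrt (ρ y) δ, abs_nonneg (E y), abs_nonneg (ρ y), hΨpos y]
  have intqm2 : IntegrableOn (fun y => max (-q y) 0 * ρ y ^ 2 / Ψ y) (Set.Icc ε 1) := by
    refine Integrable.mono' (intqm.mono_set hsub)
      (((mq'.neg.max aemeasurable_const).mul ((mρ'.mul mρ').congr (by
          filter_upwards with y using (sq (ρ y)).symm))).div mΨ).aestronglyMeasurable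
      (ae_of_all _ fun y => ?_)
    have h1 : 0 ≤ max (-q y) 0 * ρ y ^ 2 / Ψ y := by positivity
    rw [Real.norm_eq_abs, abs_of_nonneg h1, mul_div_assoc]
    exact mul_le_mul_of_nonneg_left (kw_sq_div_le (ρ y) δ hδ) (le_max_right _ _)
  have intθM : IntegrableOn (fun y => min (max (q y) 0 * ρ y ^ 2 / Ψ y) (M:ℝ))
      (Set.Icc ε 1) := by
    refine Integrable.mono' (g := fun _ => (M:ℝ)) (integrableOn_const measure_Icc_lt_top.ne)
      (mθ.min aemeasurable_const).aestronglyMeasurable (ae_of_all _ fun y => ?_)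
    have h1 : 0 ≤ max (q y) 0 * ρ y ^ 2 / Ψ y := by positivity
    rw [Real.norm_eq_abs, abs_of_nonneg (le_min h1 (Nat.cast_nonneg M))]
    exact min_le_right _ _
  -- the comparison function for FTC
  set φ : ℝ → ℝ := fun y => ρ y * E y / Ψ y + max (-q y) 0 * ρ y ^ 2 / Ψ y
      - min (max (q y) 0 * ρ y ^ 2 / Ψ y) (M:ℝ) with hφdef
  have intφ : IntegrableOn φ (Set.Icc ε 1) := (intρE.add intqm2).sub intθM
  have hφg : ∀ x ∈ Set.Ioo ε 1, ρ x * deriv ρ x / Ψ x ≤ φ x := by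
    intro x hx
    have hΨne : Ψ x ≠ 0 := ne_of_gt (hΨpos x)
    have hexp : ρ x * E x / Ψ x
        = ρ x * deriv ρ x / Ψ x + q x * ρ x ^ 2 / Ψ x := by
      rw [hE]
      field_simp
    have h3 : max (q x) 0 * ρ x ^ 2 / Ψ x
        = q x * ρ x ^ 2 / Ψ x + max (-q x) 0 * ρ x ^ 2 / Ψ x := by
      rw [kw_maxsub (q x)]
      ring
    have h4 : min (max (q x) 0 * ρ x ^ 2 / Ψ x) (M:ℝ) ≤ max (q x) 0 * ρ x ^ 2 / Ψ x :=
      min_le_left _ _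
    rw [hφdef]
    dsimp only
    linarith [hexp, h3, h4]
  have hcont : ContinuousOn Ψ (Set.Icc ε 1) := fun y hy =>
    ((hΨderiv y (hsub hy)).continuousAt).continuousWithinAt
  have hderiv : ∀ x ∈ Set.Ioo ε 1, HasDerivWithinAt Ψ (ρ x * deriv ρ x / Ψ x) (Set.Ioi x) x :=
    fun x hx => ((hΨderiv x (hsubo ⟨hx.1, hx.2.le⟩)).hasDerivWithinAt)
  have T := intervalIntegral.sub_le_integral_of_hasDeriv_right_of_le hε1.le hcont hderiv intφ hφg
  rw [intervalIntegral.integral_of_le hε1.le] at T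
  -- rearrange the real integrals
  have intρE' := intρE.mono_set Set.Ioc_subset_Icc_self
  have intqm2' := intqm2.mono_set Set.Ioc_subset_Icc_self
  have intθM' := intθM.mono_set Set.Ioc_subset_Icc_self
  have hsplit : ∫ y in Set.Ioc ε 1, φ y
      = (∫ y in Set.Ioc ε 1, (ρ y * E y / Ψ y + max (-q y) 0 * ρ y ^ 2 / Ψ y))
        - ∫ y in Set.Ioc ε 1, min (max (q y) 0 * ρ y ^ 2 / Ψ y) (M:ℝ) :=
    integral_sub (intρE'.add intqm2') intθM'
  have hadd : ∫ y in Set.Ioc ε 1, (ρ y * E y / Ψ y + max (-q y) 0 * ρ y ^ 2 / Ψ y)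
      = (∫ y in Set.Ioc ε 1, ρ y * E y / Ψ y)
        + ∫ y in Set.Ioc ε 1, max (-q y) 0 * ρ y ^ 2 / Ψ y :=
    integral_add intρE' intqm2'
  have h5 : ∫ y in Set.Ioc ε 1, ρ y * E y / Ψ y ≤ ∫ y in S, |E y| := by
    calc ∫ y in Set.Ioc ε 1, ρ y * E y / Ψ y ≤ ∫ y in Set.Ioc ε 1, |E y| := by
          refine integral_mono intρE' ((IntegrableOn.mono_set intE.abs hsubo)) fun y => ?_
          have : ρ y * E y / Ψ y ≤ |ρ y * E y / Ψ y| := le_abs_self _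
          rw [abs_div, abs_of_pos (hΨpos y), abs_mul] at this
          refine this.trans ?_
          rw [div_le_iff₀ (hΨpos y)]
          nlinarith [kw_abs_le_sqrt (ρ y) δ, abs_nonneg (E y), abs_nonneg (ρ y)]
      _ ≤ ∫ y in S, |E y| :=
          setIntegral_mono_set intE.abs (ae_of_all _ fun y => abs_nonneg _)
            (HasSubset.Subset.eventuallyLE hsubo)
  have h6 : ∫ y in Set.Ioc ε 1, max (-q y) 0 * ρ y ^ 2 / Ψ y
      ≤ ∫ y in S, max (-q y) 0 * |ρ y| := by
    calc ∫ y in Set.Ioc ε 1, max (-q y) 0 * ρ y ^ 2 / Ψ y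
        ≤ ∫ y in Set.Ioc ε 1, max (-q y) 0 * |ρ y| := by
          refine integral_mono intqm2' (intqm.mono_set hsubo) fun y => ?_
          rw [mul_div_assoc]
          exact mul_le_mul_of_nonneg_left (kw_sq_div_le (ρ y) δ hδ) (le_max_right _ _)
      _ ≤ ∫ y in S, max (-q y) 0 * |ρ y| :=
          setIntegral_mono_set intqm
            (ae_of_all _ fun y => mul_nonneg (le_max_right _ _) (abs_nonneg _))
            (HasSubset.Subset.eventuallyLE hsubo)
  have h7 : Ψ ε ≤ |ρ ε| + δ := kw_sqrt_le _ _ hδ.le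
  have h8 : 0 ≤ Ψ 1 := Real.sqrt_nonneg _
  have hreal : ∫ y in Set.Ioc ε 1, min (max (q y) 0 * ρ y ^ 2 / Ψ y) (M:ℝ)
      ≤ (∫ y in S, |E y|) + (∫ y in S, max (-q y) 0 * |ρ y|) + (|ρ ε| + δ) := by
    linarith [T, hsplit, hadd, h5, h6, h7, h8]
  have hofr : ∫⁻ y in Set.Ioc ε 1, ENNReal.ofReal (min (max (q y) 0 * ρ y ^ 2 / Ψ y) (M:ℝ))
      = ENNReal.ofReal (∫ y in Set.Ioc ε 1, min (max (q y) 0 * ρ y ^ 2 / Ψ y) (M:ℝ)) :=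
    (ofReal_integral_eq_lintegral_ofReal intθM'
      (ae_of_all _ fun y => le_min (by positivity) (Nat.cast_nonneg M))).symm
  rw [hofr]
  exact ENNReal.ofReal_le_ofReal hreal

lemma kw_supmin (x : ℝ) : (⨆ M : ℕ, ENNReal.ofReal (min x (M:ℝ))) = ENNReal.ofReal x := by
  apply le_antisymm (iSup_le fun M => ENNReal.ofReal_le_ofReal (min_le_left _ _))
  refine le_iSup_of_le ⌈x⌉₊ (ENNReal.ofReal_le_ofReal ?_)
  rw [min_eq_left (Nat.le_ceil _)]

lemma kw_core (ρ q : ℝ → ℝ)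
    (hρderiv : ∀ y ∈ Set.Ioc (0:ℝ) 1, DifferentiableAt ℝ ρ y)
    (hρsmall : ρ =O[nhdsWithin 0 (Set.Ioi 0)] (fun y => y))
    (hq : AEMeasurable q (volume.restrict (Set.Ioc (0:ℝ) 1))) :
    ∫⁻ y in Set.Ioc (0:ℝ) 1, ENNReal.ofReal (max (q y) 0 * |ρ y|)
      ≤ (∫⁻ y in Set.Ioc (0:ℝ) 1, ENNReal.ofReal (|deriv ρ y + q y * ρ y|))
        + ∫⁻ y in Set.Ioc (0:ℝ) 1, ENNReal.ofReal (max (-q y) 0 * |ρ y|) := by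
  by_cases htop : (∫⁻ y in Set.Ioc (0:ℝ) 1, ENNReal.ofReal (|deriv ρ y + q y * ρ y|))
        + (∫⁻ y in Set.Ioc (0:ℝ) 1, ENNReal.ofReal (max (-q y) 0 * |ρ y|)) = ⊤
  · exact htop ▸ le_top
  have hIE : (∫⁻ y in Set.Ioc (0:ℝ) 1, ENNReal.ofReal (|deriv ρ y + q y * ρ y|)) ≠ ⊤ :=
    fun hh => htop (by rw [hh, top_add])
  have hIqm : (∫⁻ y in Set.Ioc (0:ℝ) 1, ENNReal.ofReal (max (-q y) 0 * |ρ y|)) ≠ ⊤ :=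
    fun hh => htop (by rw [hh, add_top])
  -- measurability
  have hρcont : ContinuousOn ρ (Set.Ioc (0:ℝ) 1) := fun y hy =>
    ((hρderiv y hy).continuousAt).continuousWithinAt
  have mρ : AEMeasurable ρ (volume.restrict (Set.Ioc (0:ℝ) 1)) :=
    hρcont.aemeasurable measurableSet_Ioc
  have mdρ : Measurable (deriv ρ) := measurable_deriv ρ
  have mE : AEMeasurable (fun y => deriv ρ y + q y * ρ y)
      (volume.restrict (Set.Ioc (0:ℝ) 1)) := mdρ.aemeasurable.add (hq.mul mρ)
  have mqm : AEMeasurable (fun y => max (-q y) 0 * |ρ y|)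
      (volume.restrict (Set.Ioc (0:ℝ) 1)) :=
    (hq.neg.max aemeasurable_const).mul (continuous_abs.measurable.comp_aemeasurable mρ)
  -- integrability
  have intE : IntegrableOn (fun y => deriv ρ y + q y * ρ y) (Set.Ioc (0:ℝ) 1) := by
    refine ⟨mE.aestronglyMeasurable, ?_⟩
    rw [hasFiniteIntegral_iff_norm]
    simpa only [Real.norm_eq_abs] using lt_top_iff_ne_top.2 hIE
  have intqm : IntegrableOn (fun y => max (-q y) 0 * |ρ y|) (Set.Ioc (0:ℝ) 1) := by
    refine ⟨mqm.aestronglyMeasurable, ?_⟩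
    rw [hasFiniteIntegral_iff_norm]
    have he : ∀ y, ‖max (-q y) 0 * |ρ y|‖ = max (-q y) 0 * |ρ y| := fun y =>
      Real.norm_of_nonneg (mul_nonneg (le_max_right _ _) (abs_nonneg _))
    simp only [he]
    exact lt_top_iff_ne_top.2 hIqm
  have hA : ENNReal.ofReal (∫ y in Set.Ioc (0:ℝ) 1, |deriv ρ y + q y * ρ y|)
      = ∫⁻ y in Set.Ioc (0:ℝ) 1, ENNReal.ofReal (|deriv ρ y + q y * ρ y|) :=
    ofReal_integral_eq_lintegral_ofReal intE.abs (ae_of_all _ fun y => abs_nonneg _)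
  have hB : ENNReal.ofReal (∫ y in Set.Ioc (0:ℝ) 1, max (-q y) 0 * |ρ y|)
      = ∫⁻ y in Set.Ioc (0:ℝ) 1, ENNReal.ofReal (max (-q y) 0 * |ρ y|) :=
    ofReal_integral_eq_lintegral_ofReal intqm
      (ae_of_all _ fun y => mul_nonneg (le_max_right _ _) (abs_nonneg _))
  -- smallness of ρ at 0⁺
  obtain ⟨c, t₀, ht₀pos, ht₀le, hsmall⟩ :
      ∃ c t₀ : ℝ, 0 < t₀ ∧ t₀ ≤ 1/2 ∧ ∀ y, 0 < y → y ≤ t₀ → |ρ y| ≤ c * y := by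
    obtain ⟨c, hc⟩ := hρsmall.bound
    rw [eventually_nhdsWithin_iff, Metric.eventually_nhds_iff] at hc
    obtain ⟨ε, hε, hε'⟩ := hc
    refine ⟨c, min (ε/2) (1/2), by positivity, min_le_right _ _, fun y hy hy' => ?_⟩
    have h1 : dist y 0 < ε := by
      rw [Real.dist_eq, sub_zero, abs_of_pos hy]
      exact lt_of_le_of_lt (hy'.trans (min_le_left _ _)) (by linarith)
    simpa [Real.norm_eq_abs, abs_of_pos hy] using hε' h1 hy
  -- a measurability helper for the regularized integrand
  have mθδ : ∀ (t : Set ℝ), t ⊆ Set.Ioc (0:ℝ) 1 → ∀ δ : ℝ,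
      AEMeasurable (fun y => max (q y) 0 * ρ y ^ 2 / Real.sqrt (ρ y ^ 2 + δ ^ 2))
        (volume.restrict t) := by
    intro t ht δ
    have mρ' : AEMeasurable ρ (volume.restrict t) :=
      mρ.mono_measure (Measure.restrict_mono ht le_rfl)
    have mq' : AEMeasurable q (volume.restrict t) :=
      hq.mono_measure (Measure.restrict_mono ht le_rfl)
    have h0 : AEMeasurable (fun y => ρ y ^ 2 + δ ^ 2) (volume.restrict t) := by
      have := (mρ'.mul mρ').add_const (δ ^ 2)
      convert this using 2 with y
      simp only [Pi.mul_apply]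
      ring
    exact (((mq'.max (aemeasurable_const (b := (0:ℝ)))).mul (mρ'.mul mρ')).div
      (Real.continuous_sqrt.measurable.comp_aemeasurable h0)).congr (by
        filter_upwards with y
        simp [Function.comp, pow_two])
  -- key estimate with regularization
  have key : ∀ ε δ : ℝ, 0 < ε → ε < 1 → 0 < δ →
      ∫⁻ y in Set.Ioc ε 1,
          ENNReal.ofReal (max (q y) 0 * ρ y ^ 2 / Real.sqrt (ρ y ^ 2 + δ ^ 2))
        ≤ ((∫⁻ y in Set.Ioc (0:ℝ) 1, ENNReal.ofReal (|deriv ρ y + q y * ρ y|))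
            + ∫⁻ y in Set.Ioc (0:ℝ) 1, ENNReal.ofReal (max (-q y) 0 * |ρ y|))
          + ENNReal.ofReal (|ρ ε| + δ) := by
    intro ε δ hε hε1 hδ
    have hsubo : Set.Ioc ε 1 ⊆ Set.Ioc (0:ℝ) 1 := fun y hy => ⟨lt_trans hε hy.1, hy.2⟩
    have mθ' := mθδ (Set.Ioc ε 1) hsubo δ
    have hM : ∀ M : ℕ, ∫⁻ y in Set.Ioc ε 1,
        ENNReal.ofReal (min (max (q y) 0 * ρ y ^ 2 / Real.sqrt (ρ y ^ 2 + δ ^ 2)) (M:ℝ))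
        ≤ ((∫⁻ y in Set.Ioc (0:ℝ) 1, ENNReal.ofReal (|deriv ρ y + q y * ρ y|))
            + ∫⁻ y in Set.Ioc (0:ℝ) 1, ENNReal.ofReal (max (-q y) 0 * |ρ y|))
          + ENNReal.ofReal (|ρ ε| + δ) := by
      intro M
      calc ∫⁻ y in Set.Ioc ε 1,
          ENNReal.ofReal (min (max (q y) 0 * ρ y ^ 2 / Real.sqrt (ρ y ^ 2 + δ ^ 2)) (M:ℝ))
          ≤ ENNReal.ofReal ((∫ y in Set.Ioc (0:ℝ) 1, |deriv ρ y + q y * ρ y|)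
              + (∫ y in Set.Ioc (0:ℝ) 1, max (-q y) 0 * |ρ y|) + (|ρ ε| + δ)) :=
            kw_key_real ρ q ε δ M hρderiv hq intE intqm hε hε1 hδ
        _ ≤ ENNReal.ofReal ((∫ y in Set.Ioc (0:ℝ) 1, |deriv ρ y + q y * ρ y|)
              + (∫ y in Set.Ioc (0:ℝ) 1, max (-q y) 0 * |ρ y|))
            + ENNReal.ofReal (|ρ ε| + δ) := ENNReal.ofReal_add_le
        _ ≤ (ENNReal.ofReal (∫ y in Set.Ioc (0:ℝ) 1, |deriv ρ y + q y * ρ y|)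
              + ENNReal.ofReal (∫ y in Set.Ioc (0:ℝ) 1, max (-q y) 0 * |ρ y|))
            + ENNReal.ofReal (|ρ ε| + δ) := add_le_add_left ENNReal.ofReal_add_le _
        _ = _ := by rw [hA, hB]
    calc ∫⁻ y in Set.Ioc ε 1,
        ENNReal.ofReal (max (q y) 0 * ρ y ^ 2 / Real.sqrt (ρ y ^ 2 + δ ^ 2))
        = ∫⁻ y in Set.Ioc ε 1, ⨆ M : ℕ,
            ENNReal.ofReal (min (max (q y) 0 * ρ y ^ 2 / Real.sqrt (ρ y ^ 2 + δ ^ 2)) (M:ℝ)) :=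
          lintegral_congr fun y => (kw_supmin _).symm
      _ = ⨆ M : ℕ, ∫⁻ y in Set.Ioc ε 1,
            ENNReal.ofReal (min (max (q y) 0 * ρ y ^ 2 / Real.sqrt (ρ y ^ 2 + δ ^ 2)) (M:ℝ)) :=
          lintegral_iSup'
            (fun M => ENNReal.measurable_ofReal.comp_aemeasurable (mθ'.min aemeasurable_const))
            (ae_of_all _ fun y M N hMN => ENNReal.ofReal_le_ofReal
              (min_le_min le_rfl (Nat.cast_le.2 hMN)))
      _ ≤ _ := iSup_le hM
  set C := (∫⁻ y in Set.Ioc (0:ℝ) 1, ENNReal.ofReal (|deriv ρ y + q y * ρ y|))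
      + ∫⁻ y in Set.Ioc (0:ℝ) 1, ENNReal.ofReal (max (-q y) 0 * |ρ y|) with hC
  have hCne : C ≠ ⊤ := htop
  -- remove the regularization δ at fixed ε
  have key2 : ∀ ε : ℝ, 0 < ε → ε < 1 →
      ∫⁻ y in Set.Ioc ε 1, ENNReal.ofReal (max (q y) 0 * |ρ y|)
        ≤ C + ENNReal.ofReal (|ρ ε|) := by
    intro ε hε hε1
    have hsubo : Set.Ioc ε 1 ⊆ Set.Ioc (0:ℝ) 1 := fun y hy => ⟨lt_trans hε hy.1, hy.2⟩
    have hδn : ∀ n : ℕ, (0:ℝ) < 1/(n+1) := fun n => by positivity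
    set F : ℕ → ℝ → ENNReal := fun n y =>
      ENNReal.ofReal (max (q y) 0 * ρ y ^ 2 / Real.sqrt (ρ y ^ 2 + (1/((n:ℝ)+1)) ^ 2)) with hF
    have hFmono : ∀ y, Monotone fun n => F n y := by
      intro y n m hnm
      apply ENNReal.ofReal_le_ofReal
      have hcast : (1:ℝ)/((m:ℝ)+1) ≤ 1/((n:ℝ)+1) :=
        one_div_le_one_div_of_le (by positivity)
          (by have : (n:ℝ) ≤ (m:ℝ) := Nat.cast_le.2 hnm; linarith)
      have h1 : Real.sqrt (ρ y ^ 2 + (1/((m:ℝ)+1)) ^ 2)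
          ≤ Real.sqrt (ρ y ^ 2 + (1/((n:ℝ)+1)) ^ 2) := by
        apply Real.sqrt_le_sqrt
        nlinarith [hδn m, hδn n]
      exact div_le_div_of_nonneg_left (by positivity) (kw_sqrt_pos _ _ (hδn m)) h1
    have hFle : ∀ n : ℕ, ∫⁻ y in Set.Ioc ε 1, F n y
        ≤ C + ENNReal.ofReal (|ρ ε| + 1/((n:ℝ)+1)) := fun n =>
      key ε (1/((n:ℝ)+1)) hε hε1 (hδn n)
    have hFbound : ∀ n : ℕ, ∫⁻ y in Set.Ioc ε 1, F n y ≤ C + ENNReal.ofReal (|ρ ε|) := by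
      intro n
      refine ENNReal.le_of_forall_pos_le_add fun η hη hlt => ?_
      obtain ⟨m, hm⟩ := exists_nat_gt (1/(η:ℝ))
      have hmη : (1:ℝ)/(((max n m : ℕ):ℝ) + 1) ≤ η := by
        have h1 : (1:ℝ)/(((max n m : ℕ):ℝ) + 1) ≤ 1/((m:ℝ)+1) :=
          one_div_le_one_div_of_le (by positivity)
            (by have : (m:ℝ) ≤ ((max n m : ℕ):ℝ) := Nat.cast_le.2 (le_max_right n m); linarith)
        have h2 : (1:ℝ)/((m:ℝ)+1) ≤ η := by
          rw [div_le_iff₀ (by positivity)]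
          have hη' : (0:ℝ) < η := hη
          rw [div_lt_iff₀ hη'] at hm
          nlinarith
        linarith
      calc ∫⁻ y in Set.Ioc ε 1, F n y ≤ ∫⁻ y in Set.Ioc ε 1, F (max n m) y :=
            lintegral_mono fun y => hFmono y (le_max_left n m)
        _ ≤ C + ENNReal.ofReal (|ρ ε| + 1/(((max n m : ℕ):ℝ)+1)) := hFle _
        _ ≤ C + (ENNReal.ofReal (|ρ ε|) + ENNReal.ofReal (1/(((max n m : ℕ):ℝ)+1))) :=
            add_le_add_right ENNReal.ofReal_add_le _
        _ ≤ C + (ENNReal.ofReal (|ρ ε|) + η) := by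
            refine add_le_add_right (add_le_add_right ?_ _) _
            rw [← ENNReal.ofReal_coe_nnreal]
            exact ENNReal.ofReal_le_ofReal hmη
        _ = C + ENNReal.ofReal (|ρ ε|) + η := by rw [← add_assoc]
    have hFsup : ∀ y, (⨆ n, F n y) = ENNReal.ofReal (max (q y) 0 * |ρ y|) := by
      intro y
      by_cases hρ0 : ρ y = 0
      · simp [hF, hρ0]
      · have htend : Filter.Tendsto
            (fun n : ℕ => max (q y) 0 * ρ y ^ 2 / Real.sqrt (ρ y ^ 2 + (1/((n:ℝ)+1)) ^ 2))
            atTop (nhds (max (q y) 0 * |ρ y|)) := by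
          have h1 : Filter.Tendsto (fun n : ℕ => 1/((n:ℝ)+1)) atTop (nhds 0) :=
            tendsto_one_div_add_atTop_nhds_zero_nat
          have h2 : ContinuousAt
              (fun d : ℝ => max (q y) 0 * ρ y ^ 2 / Real.sqrt (ρ y ^ 2 + d ^ 2)) 0 := by
            have hne : Real.sqrt (ρ y ^ 2 + (0:ℝ) ^ 2) ≠ 0 := by
              rw [show ρ y ^ 2 + (0:ℝ)^2 = ρ y ^ 2 by ring, Real.sqrt_sq_eq_abs]
              exact ne_of_gt (abs_pos.2 hρ0)
            exact ContinuousAt.div continuousAt_const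
              (Real.continuous_sqrt.continuousAt.comp (by fun_prop)) hne
          have h3 := h2.tendsto.comp h1
          have h4 : max (q y) 0 * ρ y ^ 2 / Real.sqrt (ρ y ^ 2 + (0:ℝ) ^ 2)
              = max (q y) 0 * |ρ y| := by
            rw [show ρ y ^ 2 + (0:ℝ)^2 = ρ y ^ 2 by ring, Real.sqrt_sq_eq_abs,
              show ρ y ^ 2 = |ρ y| * |ρ y| from by rw [abs_mul_abs_self, pow_two]]
            field_simp [abs_ne_zero.mpr hρ0]
          rw [h4] at h3
          exact h3
        have h5 := (ENNReal.continuous_ofReal.continuousAt.tendsto).comp htend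
        exact tendsto_nhds_unique (tendsto_atTop_iSup (hFmono y)) h5
    calc ∫⁻ y in Set.Ioc ε 1, ENNReal.ofReal (max (q y) 0 * |ρ y|)
        = ∫⁻ y in Set.Ioc ε 1, ⨆ n, F n y := lintegral_congr fun y => (hFsup y).symm
      _ = ⨆ n, ∫⁻ y in Set.Ioc ε 1, F n y :=
          lintegral_iSup'
            (fun n => ENNReal.measurable_ofReal.comp_aemeasurable
              (mθδ (Set.Ioc ε 1) hsubo (1/((n:ℝ)+1))))
            (ae_of_all _ fun y => hFmono y)
      _ ≤ C + ENNReal.ofReal (|ρ ε|) := iSup_le hFbound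
  -- let ε → 0 along s n = t₀/(n+1)
  set s : ℕ → ℝ := fun n => t₀/((n:ℝ)+1) with hs
  have hsdef : ∀ n : ℕ, s n = t₀/((n:ℝ)+1) := fun n => rfl
  have hspos : ∀ n, 0 < s n := fun n => by rw [hsdef]; positivity
  have hslt1 : ∀ n, s n < 1 := fun n => by
    have h1 : s n ≤ t₀ := by
      rw [hsdef, div_le_iff₀ (by positivity)]
      nlinarith [ht₀pos]
    linarith
  have hsanti : ∀ n m : ℕ, n ≤ m → s m ≤ s n := by
    intro n m hnm
    rw [hsdef, hsdef]
    apply div_le_div_of_nonneg_left ht₀pos.le (by positivity)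
    have : (n:ℝ) ≤ (m:ℝ) := Nat.cast_le.2 hnm
    linarith
  set G : ℕ → ℝ → ENNReal := fun n => (Set.Ioc (s n) 1).indicator
      (fun y => ENNReal.ofReal (max (q y) 0 * |ρ y|)) with hG
  have hsubn : ∀ n, Set.Ioc (s n) 1 ⊆ Set.Ioc (0:ℝ) 1 :=
    fun n y hy => ⟨lt_trans (hspos n) hy.1, hy.2⟩
  have mqp : ∀ (t : Set ℝ), t ⊆ Set.Ioc (0:ℝ) 1 →
      AEMeasurable (fun y => ENNReal.ofReal (max (q y) 0 * |ρ y|)) (volume.restrict t) := by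
    intro t ht
    exact ENNReal.measurable_ofReal.comp_aemeasurable
      (((hq.mono_measure (Measure.restrict_mono ht le_rfl)).max
          (aemeasurable_const (b := (0:ℝ)))).mul
        (continuous_abs.measurable.comp_aemeasurable
          (mρ.mono_measure (Measure.restrict_mono ht le_rfl))))
  have hGmeas : ∀ n, AEMeasurable (G n) volume := by
    intro n
    rw [hG]
    rw [aemeasurable_indicator_iff measurableSet_Ioc]
    exact mqp _ (hsubn n)
  have hGptmono : ∀ y, Monotone fun n => G n y := by
    intro y n m hnm
    exact Set.indicator_le_indicator_of_subset
      (Set.Ioc_subset_Ioc_left (hsanti n m hnm)) (fun a => zero_le) y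
  have hGbound : ∀ n, ∫⁻ y, G n y ≤ C := by
    intro n
    refine ENNReal.le_of_forall_pos_le_add fun η hη hlt => ?_
    obtain ⟨m, hm⟩ := exists_nat_gt (c * t₀/(η:ℝ))
    have hcsm : c * s m < η := by
      have hη' : (0:ℝ) < η := hη
      rw [div_lt_iff₀ hη'] at hm
      rw [hsdef, ← mul_div_assoc, div_lt_iff₀ (by positivity : (0:ℝ) < (m:ℝ)+1)]
      nlinarith [hη']
    calc ∫⁻ y, G n y ≤ ∫⁻ y, G (max n m) y := lintegral_mono fun y => hGptmono y (le_max_left n m)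
      _ = ∫⁻ y in Set.Ioc (s (max n m)) 1, ENNReal.ofReal (max (q y) 0 * |ρ y|) := by
          rw [hG, lintegral_indicator measurableSet_Ioc]
      _ ≤ C + ENNReal.ofReal (|ρ (s (max n m))|) :=
          key2 _ (hspos _) (hslt1 _)
      _ ≤ C + ENNReal.ofReal (c * s (max n m)) := by
          refine add_le_add_right (ENNReal.ofReal_le_ofReal ?_) _
          refine hsmall _ (hspos _) ?_
          rw [hsdef, div_le_iff₀ (by positivity)]
          nlinarith [ht₀pos]
      _ ≤ C + η := by
          refine add_le_add_right ?_ _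
          rw [← ENNReal.ofReal_coe_nnreal]
          apply ENNReal.ofReal_le_ofReal
          have h1 : c * s (max n m) ≤ c * s m := by
            have hc0 : 0 ≤ c := by
              have := hsmall t₀ ht₀pos le_rfl
              nlinarith [abs_nonneg (ρ t₀), ht₀pos]
            exact mul_le_mul_of_nonneg_left (hsanti m (max n m) (le_max_right n m)) hc0
          linarith
  have hGsup : ∀ y, (⨆ n, G n y)
      = (Set.Ioc (0:ℝ) 1).indicator (fun y => ENNReal.ofReal (max (q y) 0 * |ρ y|)) y := by
    intro y
    by_cases hy : y ∈ Set.Ioc (0:ℝ) 1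
    · rw [Set.indicator_of_mem hy]
      apply le_antisymm
      · refine iSup_le fun n => ?_
        by_cases h2 : y ∈ Set.Ioc (s n) 1
        · simp only [hG]
          rw [Set.indicator_of_mem h2]
        · simp only [hG]
          rw [Set.indicator_of_notMem h2]
          exact zero_le
      · obtain ⟨n, hn⟩ : ∃ n : ℕ, s n < y := by
          obtain ⟨n, hn⟩ := exists_nat_gt (t₀ / y)
          refine ⟨n, ?_⟩
          rw [hsdef, div_lt_iff₀ (by positivity)]
          rw [div_lt_iff₀ hy.1] at hn
          nlinarith [hy.1]
        refine le_iSup_of_le n ?_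
        simp only [hG]
        rw [Set.indicator_of_mem (Set.mem_Ioc.mpr ⟨hn, hy.2⟩)
          (fun y => ENNReal.ofReal ((q y ⊔ 0) * |ρ y|))]
    · rw [Set.indicator_of_notMem hy]
      refine le_antisymm (iSup_le fun n => ?_) zero_le
      simp only [hG]
      rw [Set.indicator_of_notMem (fun h2 => hy (hsubn n h2))]
  calc ∫⁻ y in Set.Ioc (0:ℝ) 1, ENNReal.ofReal (max (q y) 0 * |ρ y|)
      = ∫⁻ y, (Set.Ioc (0:ℝ) 1).indicator
          (fun y => ENNReal.ofReal (max (q y) 0 * |ρ y|)) y := by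
        rw [lintegral_indicator measurableSet_Ioc]
    _ = ∫⁻ y, ⨆ n, G n y := lintegral_congr fun y => (hGsup y).symm
    _ = ⨆ n, ∫⁻ y, G n y := lintegral_iSup' hGmeas (ae_of_all _ fun y => hGptmono y)
    _ ≤ C := iSup_le hGbound

/-- Scalar model of the integration-by-parts chain (3.22): if `f > 0` is a
bounded differentiable integrating factor with `f'/f = 2h + α`, `h ≥ 0`, and
`ρ` is differentiable with `ρ(y) = O(y)` as `y → 0⁺`, then
`∫₀¹ 2h|ρ| ≤ ∫₀¹ |ρ' + 2hρ + αρ| + ∫₀¹ |α||ρ|`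
(the boundary term at `y = 0` vanishes since `ρ(y) = O(y)`). -/
theorem kw_integration_by_parts_estimate
    (f f' ρ ρ' h α : ℝ → ℝ)
    (hfpos : ∀ y ∈ Set.Ioc (0:ℝ) 1, 0 < f y)
    (hfderiv : ∀ y ∈ Set.Ioc (0:ℝ) 1, HasDerivAt f (f' y) y)
    (hfbdd : ∃ B : ℝ, ∀ y ∈ Set.Ioc (0:ℝ) 1, |f y| ≤ B)
    (hfactor : ∀ y ∈ Set.Ioc (0:ℝ) 1, f' y / f y = 2 * h y + α y)
    (hh : ∀ y ∈ Set.Ioc (0:ℝ) 1, 0 ≤ h y)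
    (hρderiv : ∀ y ∈ Set.Ioc (0:ℝ) 1, HasDerivAt ρ (ρ' y) y)
    (hρsmall : ρ =O[nhdsWithin 0 (Set.Ioi 0)] (fun y => y)) :
    ∫⁻ y in Set.Ioc (0:ℝ) 1, ENNReal.ofReal (2 * h y * |ρ y|)
      ≤ (∫⁻ y in Set.Ioc (0:ℝ) 1,
            ENNReal.ofReal (|ρ' y + 2 * h y * ρ y + α y * ρ y|))
        + ∫⁻ y in Set.Ioc (0:ℝ) 1, ENNReal.ofReal (|α y| * |ρ y|) := by
  have hmS : MeasurableSet (Set.Ioc (0:ℝ) 1) := measurableSet_Ioc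
  set q : ℝ → ℝ := fun y => deriv f y / f y with hqdef
  have hqval : ∀ y ∈ Set.Ioc (0:ℝ) 1, q y = 2 * h y + α y := by
    intro y hy
    rw [hqdef]
    simp only
    rw [(hfderiv y hy).deriv]
    exact hfactor y hy
  have hρval : ∀ y ∈ Set.Ioc (0:ℝ) 1, deriv ρ y = ρ' y := fun y hy => (hρderiv y hy).deriv
  -- measurability of q
  have hfcont : ContinuousOn f (Set.Ioc (0:ℝ) 1) := fun y hy =>
    ((hfderiv y hy).continuousAt).continuousWithinAt
  have mf : AEMeasurable f (volume.restrict (Set.Ioc (0:ℝ) 1)) :=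
    hfcont.aemeasurable hmS
  have mq : AEMeasurable q (volume.restrict (Set.Ioc (0:ℝ) 1)) :=
    (measurable_deriv f).aemeasurable.div mf
  have hρcont : ContinuousOn ρ (Set.Ioc (0:ℝ) 1) := fun y hy =>
    ((hρderiv y hy).continuousAt).continuousWithinAt
  have mρ : AEMeasurable ρ (volume.restrict (Set.Ioc (0:ℝ) 1)) :=
    hρcont.aemeasurable hmS
  have mabsρ : AEMeasurable (fun y => |ρ y|) (volume.restrict (Set.Ioc (0:ℝ) 1)) :=
    continuous_abs.measurable.comp_aemeasurable mρ
  have mqp : AEMeasurable (fun y => ENNReal.ofReal (max (q y) 0 * |ρ y|))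
      (volume.restrict (Set.Ioc (0:ℝ) 1)) :=
    ENNReal.measurable_ofReal.comp_aemeasurable
      ((mq.max (aemeasurable_const (b := (0:ℝ)))).mul mabsρ)
  have mqm : AEMeasurable (fun y => ENNReal.ofReal (max (-q y) 0 * |ρ y|))
      (volume.restrict (Set.Ioc (0:ℝ) 1)) :=
    ENNReal.measurable_ofReal.comp_aemeasurable
      ((mq.neg.max (aemeasurable_const (b := (0:ℝ)))).mul mabsρ)
  -- rewrite the first right-hand integral in terms of q and deriv ρ
  have hIE : (∫⁻ y in Set.Ioc (0:ℝ) 1,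
        ENNReal.ofReal (|ρ' y + 2 * h y * ρ y + α y * ρ y|))
      = ∫⁻ y in Set.Ioc (0:ℝ) 1, ENNReal.ofReal (|deriv ρ y + q y * ρ y|) := by
    refine setLIntegral_congr_fun hmS (fun y hy => ?_)
    rw [hρval y hy, hqval y hy]
    congr 1
    ring_nf
  -- the core estimate
  have core := kw_core ρ q (fun y hy => (hρderiv y hy).differentiableAt) hρsmall mq
  -- step 1 : 2h|ρ| + q⁻|ρ| ≤ q⁺|ρ| + |α||ρ| integrated
  have step1 : (∫⁻ y in Set.Ioc (0:ℝ) 1, ENNReal.ofReal (2 * h y * |ρ y|))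
        + (∫⁻ y in Set.Ioc (0:ℝ) 1, ENNReal.ofReal (max (-q y) 0 * |ρ y|))
      ≤ (∫⁻ y in Set.Ioc (0:ℝ) 1, ENNReal.ofReal (max (q y) 0 * |ρ y|))
        + ∫⁻ y in Set.Ioc (0:ℝ) 1, ENNReal.ofReal (|α y| * |ρ y|) := by
    calc (∫⁻ y in Set.Ioc (0:ℝ) 1, ENNReal.ofReal (2 * h y * |ρ y|))
        + (∫⁻ y in Set.Ioc (0:ℝ) 1, ENNReal.ofReal (max (-q y) 0 * |ρ y|))
        = ∫⁻ y in Set.Ioc (0:ℝ) 1,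
            (ENNReal.ofReal (2 * h y * |ρ y|) + ENNReal.ofReal (max (-q y) 0 * |ρ y|)) :=
          (lintegral_add_right' _ mqm).symm
      _ ≤ ∫⁻ y in Set.Ioc (0:ℝ) 1,
            (ENNReal.ofReal (max (q y) 0 * |ρ y|) + ENNReal.ofReal (|α y| * |ρ y|)) := by
          refine lintegral_mono_ae ?_
          filter_upwards [ae_restrict_mem hmS] with y hy
          have hq2 : q y = 2 * h y + α y := hqval y hy
          have h2h : 0 ≤ 2 * h y := by linarith [hh y hy]
          rw [← ENNReal.ofReal_add (mul_nonneg h2h (abs_nonneg _))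
              (mul_nonneg (le_max_right _ _) (abs_nonneg _)),
            ← ENNReal.ofReal_add (mul_nonneg (le_max_right _ _) (abs_nonneg _))
              (mul_nonneg (abs_nonneg _) (abs_nonneg _))]
          apply ENNReal.ofReal_le_ofReal
          have hfac : (2 * h y + max (-q y) 0) * |ρ y| ≤ (max (q y) 0 + |α y|) * |ρ y| := by
            refine mul_le_mul_of_nonneg_right ?_ (abs_nonneg _)
            have hmx := kw_maxsub (q y)
            have habs : -α y ≤ |α y| := neg_le_abs _
            linarith
          nlinarith [hfac]
      _ = _ := lintegral_add_left' mqp _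
  -- step 2 : q⁻ ≤ |α| on the interval
  have step2 : (∫⁻ y in Set.Ioc (0:ℝ) 1, ENNReal.ofReal (max (-q y) 0 * |ρ y|))
      ≤ ∫⁻ y in Set.Ioc (0:ℝ) 1, ENNReal.ofReal (|α y| * |ρ y|) := by
    refine lintegral_mono_ae ?_
    filter_upwards [ae_restrict_mem hmS] with y hy
    apply ENNReal.ofReal_le_ofReal
    refine mul_le_mul_of_nonneg_right ?_ (abs_nonneg _)
    have hq2 : q y = 2 * h y + α y := hqval y hy
    have h2h : 0 ≤ 2 * h y := by linarith [hh y hy]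
    have habs : -α y ≤ |α y| := neg_le_abs _
    exact max_le (by linarith) (abs_nonneg _)
  rw [hIE]
  by_cases hqm : (∫⁻ y in Set.Ioc (0:ℝ) 1, ENNReal.ofReal (max (-q y) 0 * |ρ y|)) = ⊤
  · have hα : (∫⁻ y in Set.Ioc (0:ℝ) 1, ENNReal.ofReal (|α y| * |ρ y|)) = ⊤ :=
      top_unique (hqm ▸ step2)
    rw [hα, add_top]
    exact le_top
  · have hcomb : (∫⁻ y in Set.Ioc (0:ℝ) 1, ENNReal.ofReal (2 * h y * |ρ y|))
          + (∫⁻ y in Set.Ioc (0:ℝ) 1, ENNReal.ofReal (max (-q y) 0 * |ρ y|))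
        ≤ ((∫⁻ y in Set.Ioc (0:ℝ) 1, ENNReal.ofReal (|deriv ρ y + q y * ρ y|))
            + ∫⁻ y in Set.Ioc (0:ℝ) 1, ENNReal.ofReal (|α y| * |ρ y|))
          + (∫⁻ y in Set.Ioc (0:ℝ) 1, ENNReal.ofReal (max (-q y) 0 * |ρ y|)) := by
      calc (∫⁻ y in Set.Ioc (0:ℝ) 1, ENNReal.ofReal (2 * h y * |ρ y|))
          + (∫⁻ y in Set.Ioc (0:ℝ) 1, ENNReal.ofReal (max (-q y) 0 * |ρ y|))
          ≤ (∫⁻ y in Set.Ioc (0:ℝ) 1, ENNReal.ofReal (max (q y) 0 * |ρ y|))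
            + ∫⁻ y in Set.Ioc (0:ℝ) 1, ENNReal.ofReal (|α y| * |ρ y|) := step1
        _ ≤ ((∫⁻ y in Set.Ioc (0:ℝ) 1, ENNReal.ofReal (|deriv ρ y + q y * ρ y|))
              + ∫⁻ y in Set.Ioc (0:ℝ) 1, ENNReal.ofReal (max (-q y) 0 * |ρ y|))
            + ∫⁻ y in Set.Ioc (0:ℝ) 1, ENNReal.ofReal (|α y| * |ρ y|) :=
            add_le_add_left core _
        _ = _ := by ring
    exact (ENNReal.add_le_add_iff_right hqm).1 hcomb
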